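/- Let $p$ be a prime, and let $F$ be a field with a nonarchimedean absolute value $|\cdot|$. Let $\pi, \zeta, s, t, \beta, \beta' \in F$ satisfy: $\omega := \zeta^p$ is a primitive $p$-th root of unity; $|1 - \zeta| < 1$; $0 < |\pi| < 1$ and $|1 - \omega| = |\pi|$; $|t|^p = |\pi|$; $|s| = |s-1| = 1$; and $0 < |\beta| \le |\pi|^5$, $0 < |\beta'| \le |\pi|^5$. For $0 \le i \le p-1$ set $c_i = \zeta\omega^i$, $d_i = s + t\omega^i$, and define the matrices $A_i = \begin{pmatrix} (1 - \beta\pi) c_i & (\beta - 1)\pi c_i^2 \\ 1 - \beta & (\beta - \pi) c_i \end{pmatrix}$ and $B_i = \begin{pmatrix} (1 - \beta'\pi) d_i & (\beta' - 1)\pi d_i^2 \\ 1 - \beta' & (\beta' - \pi) d_i \end{pmatrix}$ in $GL_2(F)$. Then the images of $A_0, \dots, A_{p-1}, B_0, \dots, B_{p-1}$ in $PGL_2(F) = GL_2(F)/\mathrm{center}$ generate a free group of rank $2p$; equivalently, the group homomorphism from the free group on $2p$ generators to $GL_2(F)/\mathrm{center}$ sending the generators to the classes of these $2p$ matrices is injective.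 -/

import Mathlib

namespace GTPaux

variable {F : Type*} [Field F] (v : AbsoluteValue F ℝ)

lemma add_big (hna : IsNonarchimedean v) {x y : F} (h : v y < v x) : v (x + y) = v x := by
  have h1 : v (x + y) ≤ v x := le_trans (hna x y) (by simp [h.le])
  have h2 : v x ≤ max (v (x + y)) (v y) := by
    have := hna (x + y) (-y)
    simpa using this
  rcases max_cases (v (x + y)) (v y) with ⟨he, _⟩ | ⟨he, _⟩
  · rw [he] at h2; linarith
  · rw [he] at h2; linarith

lemma sub_big (hna : IsNonarchimedean v) {x y : F} (h : v y < v x) : v (x - y) = v x := by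
  have := add_big v hna (x := x) (y := -y) (by simpa using h)
  simpa [sub_eq_add_neg] using this

lemma sub_le_max (hna : IsNonarchimedean v) (x y : F) : v (x - y) ≤ max (v x) (v y) := by
  have := hna x (-y)
  simpa [sub_eq_add_neg] using this

lemma one_sub_small (hna : IsNonarchimedean v) {x : F} (h : v x < 1) : v (1 - x) = 1 := by
  have := sub_big v hna (x := (1 : F)) (y := x) (by simpa using h)
  simpa using this

/-- Möbius numerator/denominator. -/
def mden (M : Matrix (Fin 2) (Fin 2) F) (z : F) : F := M 1 0 * z + M 1 1

def mob (M : Matrix (Fin 2) (Fin 2) F) (z : F) : F :=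
  (M 0 0 * z + M 0 1) / (M 1 0 * z + M 1 1)

lemma mden_mul (M N : Matrix (Fin 2) (Fin 2) F) (z : F) (h1 : mden N z ≠ 0) :
    mden (M * N) z = mden M (mob N z) * mden N z := by
  simp only [mden, mob, Matrix.mul_apply, Fin.sum_univ_two]
  simp only [mden] at h1
  field_simp
  ring

lemma mob_mul (M N : Matrix (Fin 2) (Fin 2) F) (z : F) (h1 : mden N z ≠ 0)
    (h2 : mden M (mob N z) ≠ 0) : mob (M * N) z = mob M (mob N z) := by
  have hd := mden_mul M N z h1
  simp only [mden, mob, Matrix.mul_apply, Fin.sum_univ_two] at *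
  field_simp at h1 h2 ⊢
  ring

lemma mob_smul (k : F) (hk : k ≠ 0) (N : Matrix (Fin 2) (Fin 2) F) (z : F) :
    mob (k • N) z = mob N z := by
  simp only [mob, Matrix.smul_apply, smul_eq_mul]
  rcases eq_or_ne (N 1 0 * z + N 1 1) 0 with h | h
  · rw [show k * N 1 0 * z + k * N 1 1 = k * (N 1 0 * z + N 1 1) by ring, h, mul_zero]
    simp [h]
  · rw [show k * N 1 0 * z + k * N 1 1 = k * (N 1 0 * z + N 1 1) by ring]
    field_simp

lemma mden_smul (k : F) (N : Matrix (Fin 2) (Fin 2) F) (z : F) :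
    mden (k • N) z = k * mden N z := by
  simp only [mden, Matrix.smul_apply, smul_eq_mul]; ring



lemma fwd (hna : IsNonarchimedean v) {π c β : F} (hπ0 : 0 < v π) (hπ1 : v π < 1)
    (hc : v c = 1) (hb0 : 0 < v β) (hb : v β ≤ v π ^ 5) {z : F}
    (hz : v β / v π ^ 2 < v (z - π * c)) :
    (1 - β) * z + (β - π) * c ≠ 0 ∧
      v (((1 - β * π) * c * z + (β - 1) * π * c ^ 2) / ((1 - β) * z + (β - π) * c) - c)
        ≤ v π ^ 2 := by
  have hq2 : (0:ℝ) < v π ^ 2 := by positivity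
  have hq21 : v π ^ 2 ≤ 1 := by nlinarith
  have hb1 : v β < 1 := by
    have := pow_lt_one₀ hπ0.le hπ1 (by norm_num : 5 ≠ 0)
    linarith
  have hX0 : 0 < v (z - π * c) := lt_of_le_of_lt (by positivity) hz
  have hbq : v β < v (z - π * c) := by
    have : v β ≤ v β / v π ^ 2 := by
      rw [le_div_iff₀ hq2]; nlinarith
    linarith
  have h1β : v (1 - β) = 1 := one_sub_small v hna hb1
  have h1π : v (1 - π) = 1 := one_sub_small v hna hπ1
  have hD : v ((1 - β) * z + (β - π) * c) = v (z - π * c) := by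
    have hrw : (1 - β) * z + (β - π) * c = (1 - β) * (z - π * c) + c * β * (1 - π) := by ring
    rw [hrw, add_big v hna]
    · rw [v.map_mul, h1β, one_mul]
    · simp only [v.map_mul, hc, h1β, h1π, one_mul, mul_one]
      exact hbq
  have hDne : (1 - β) * z + (β - π) * c ≠ 0 := by
    rw [← v.ne_zero_iff, hD]; exact ne_of_gt hX0
  refine ⟨hDne, ?_⟩
  have hnum : (1 - β * π) * c * z + (β - 1) * π * c ^ 2
      = c * β * (1 - π) * (z - c) + c * ((1 - β) * z + (β - π) * c) := by ring
  have hkey : ((1 - β * π) * c * z + (β - 1) * π * c ^ 2) / ((1 - β) * z + (β - π) * c) - c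
      = c * β * (1 - π) * (z - c) / ((1 - β) * z + (β - π) * c) := by
    rw [hnum, add_div, mul_div_cancel_right₀ _ hDne, add_sub_cancel_right]
  rw [hkey, map_div₀, hD, v.map_mul, v.map_mul, v.map_mul, hc, h1π, one_mul, mul_one]
  have hzc : v (z - c) ≤ max (v (z - π * c)) 1 := by
    have hrw : z - c = (z - π * c) + (π * c - c) := by ring
    have h2 : v (π * c - c) = 1 := by
      have h3 : π * c - c = c * (π - 1) := by ring
      rw [h3, v.map_mul, hc, one_mul, v.map_sub, one_sub_small v hna hπ1]
    rw [hrw]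
    have := hna (z - π * c) (π * c - c)
    rw [h2] at this
    exact this
  rw [div_le_iff₀ hX0]
  have haX : v β < v π ^ 2 * v (z - π * c) := by
    rw [div_lt_iff₀ hq2] at hz; nlinarith
  have hq52 : v π ^ 5 ≤ v π ^ 2 :=
    pow_le_pow_of_le_one hπ0.le hπ1.le (by norm_num)
  rcases le_total (v (z - π * c)) 1 with hX1 | h1X
  · have h4 : v (z - c) ≤ 1 := le_trans hzc (by simp [hX1])
    have h5 : v β * v (z - c) ≤ v β := by
      nlinarith [mul_le_mul_of_nonneg_left h4 hb0.le]
    linarith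
  · have h4 : v (z - c) ≤ v (z - π * c) := le_trans hzc (by simp [h1X])
    have h5 : v β * v (z - c) ≤ v π ^ 5 * v (z - π * c) :=
      mul_le_mul hb h4 (v.nonneg _) (by positivity)
    have h6 : v π ^ 5 * v (z - π * c) ≤ v π ^ 2 * v (z - π * c) :=
      mul_le_mul_of_nonneg_right hq52 hX0.le
    linarith

lemma bwd (hna : IsNonarchimedean v) {π c β : F} (hπ0 : 0 < v π) (hπ1 : v π < 1)
    (hc : v c = 1) (hb0 : 0 < v β) (hb : v β ≤ v π ^ 5) {z : F}
    (hz : v π ^ 2 < v (z - c)) :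
    -(1 - β) * z + (1 - β * π) * c ≠ 0 ∧
      v (((β - π) * c * z + -((β - 1) * π * c ^ 2)) / (-(1 - β) * z + (1 - β * π) * c) - π * c)
        ≤ v β / v π ^ 2 := by
  have hq2 : (0:ℝ) < v π ^ 2 := by positivity
  have hq21 : v π ^ 2 ≤ 1 := by nlinarith
  have hb1 : v β < 1 := by
    have := pow_lt_one₀ hπ0.le hπ1 (by norm_num : 5 ≠ 0)
    linarith
  have hq52 : v π ^ 5 ≤ v π ^ 2 :=
    pow_le_pow_of_le_one hπ0.le hπ1.le (by norm_num)
  have hX0 : 0 < v (z - c) := lt_of_le_of_lt hq2.le hz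
  have hbq : v β < v (z - c) := by nlinarith
  have h1β : v (1 - β) = 1 := one_sub_small v hna hb1
  have h1π : v (1 - π) = 1 := one_sub_small v hna hπ1
  have hD : v (-(1 - β) * z + (1 - β * π) * c) = v (z - c) := by
    have hrw : -(1 - β) * z + (1 - β * π) * c = -(1 - β) * (z - c) + c * β * (1 - π) := by ring
    rw [hrw, add_big v hna]
    · rw [v.map_mul, v.map_neg, h1β, one_mul]
    · simp only [v.map_mul, v.map_neg, hc, h1β, h1π, one_mul, mul_one]
      exact hbq
  have hDne : -(1 - β) * z + (1 - β * π) * c ≠ 0 := by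
    rw [← v.ne_zero_iff, hD]; exact ne_of_gt hX0
  refine ⟨hDne, ?_⟩
  have hnum : (β - π) * c * z + -((β - 1) * π * c ^ 2)
      = c * β * (1 - π) * (z - π * c) + (π * c) * (-(1 - β) * z + (1 - β * π) * c) := by ring
  have hkey : ((β - π) * c * z + -((β - 1) * π * c ^ 2)) / (-(1 - β) * z + (1 - β * π) * c) - π * c
      = c * β * (1 - π) * (z - π * c) / (-(1 - β) * z + (1 - β * π) * c) := by
    rw [hnum, add_div, mul_div_cancel_right₀ _ hDne, add_sub_cancel_right]
  rw [hkey, map_div₀, hD, v.map_mul, v.map_mul, v.map_mul, hc, h1π, one_mul, mul_one]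
  have hzc : v (z - π * c) ≤ max (v (z - c)) 1 := by
    have hrw : z - π * c = (z - c) + (c - π * c) := by ring
    have h2 : v (c - π * c) = 1 := by
      have h3 : c - π * c = c * (1 - π) := by ring
      rw [h3, v.map_mul, hc, one_mul, h1π]
    rw [hrw]
    have := hna (z - c) (c - π * c)
    rw [h2] at this
    exact this
  rw [div_le_div_iff₀ hX0 hq2]
  rcases le_total (v (z - c)) 1 with hX1 | h1X
  · have h4 : v (z - π * c) ≤ 1 := le_trans hzc (by simp [hX1])
    have h5 : v β * v (z - π * c) * v π ^ 2 ≤ v β * v π ^ 2 := by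
      nlinarith [mul_le_mul_of_nonneg_right (mul_le_mul_of_nonneg_left h4 (v.nonneg β)) hq2.le]
    have h6 : v β * v π ^ 2 ≤ v β * v (z - c) := by
      nlinarith [mul_le_mul_of_nonneg_left hz.le hb0.le]
    linarith
  · have h4 : v (z - π * c) ≤ v (z - c) := le_trans hzc (by simp [h1X])
    have h5 : v β * v (z - π * c) * v π ^ 2 ≤ v β * v (z - c) * v π ^ 2 := by
      nlinarith [mul_le_mul_of_nonneg_right (mul_le_mul_of_nonneg_left h4 (v.nonneg β)) hq2.le]
    have h6 : v β * v (z - c) * v π ^ 2 ≤ v β * v (z - c) * 1 := by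
      nlinarith [mul_le_mul_of_nonneg_left hq21 (mul_nonneg (v.nonneg β) (v.nonneg (z - c)))]
    linarith



lemma chain_of_reduced {α : Type*} [DecidableEq α] :
    ∀ L : List (α × Bool), FreeGroup.reduce L = L →
      List.Chain' (fun a b : α × Bool => ¬(a.1 = b.1 ∧ a.2 = !b.2)) L := by
  intro L
  induction L with
  | nil => intro _; exact List.isChain_nil
  | cons a L ih =>
    intro h
    cases L with
    | nil => exact List.isChain_singleton _
    | cons b L' =>
      have hc := FreeGroup.reduce.cons (L := b :: L') a
      rcases hr : FreeGroup.reduce (b :: L') with _ | ⟨hd, tl⟩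
      · rw [hr, h] at hc
        simp at hc
      · rw [hr] at hc
        dsimp only at hc
        by_cases hcond : a.1 = hd.1 ∧ a.2 = !hd.2
        · rw [if_pos hcond, h] at hc
          obtain ⟨n, hn⟩ := FreeGroup.Red.length (FreeGroup.reduce.red (L := b :: L'))
          rw [hr] at hn
          have h1 : (a :: b :: L').length = tl.length := by rw [hc]
          simp at hn h1
          omega
        · rw [if_neg hcond, h] at hc
          have hb : hd = b ∧ tl = L' := by
            have := hc.symm
            simp only [List.cons.injEq] at this
            exact ⟨this.2.1, this.2.2⟩
          refine List.isChain_cons_cons.mpr ?_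
          constructor
          · rw [hb.1] at hcond; exact hcond
          · apply ih
            rw [hr, hb.1, hb.2]

lemma center_scalar {F : Type*} [Field F] (u : (Matrix (Fin 2) (Fin 2) F)ˣ)
    (h : u ∈ Subgroup.center (Matrix (Fin 2) (Fin 2) F)ˣ) :
    ∃ k : F, (u : Matrix (Fin 2) (Fin 2) F) = k • 1 := by
  have h' := Subgroup.mem_center_iff.mp h
  have hu1 : IsUnit (!![1, 1; 0, 1] : Matrix (Fin 2) (Fin 2) F) := by
    rw [Matrix.isUnit_iff_isUnit_det]
    simp [Matrix.det_fin_two]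
  have hu2 : IsUnit (!![1, 0; 1, 1] : Matrix (Fin 2) (Fin 2) F) := by
    rw [Matrix.isUnit_iff_isUnit_det]
    simp [Matrix.det_fin_two]
  obtain ⟨U1, hU1⟩ := hu1
  obtain ⟨U2, hU2⟩ := hu2
  have e1 : (!![1, 1; 0, 1] : Matrix (Fin 2) (Fin 2) F) * (u : Matrix (Fin 2) (Fin 2) F) = (u : Matrix (Fin 2) (Fin 2) F) * !![1, 1; 0, 1] := by
    have := h' U1
    have := congrArg Units.val this
    simpa only [Units.val_mul, hU1] using this
  have e2 : (!![1, 0; 1, 1] : Matrix (Fin 2) (Fin 2) F) * (u : Matrix (Fin 2) (Fin 2) F) = (u : Matrix (Fin 2) (Fin 2) F) * !![1, 0; 1, 1] := by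
    have := h' U2
    have := congrArg Units.val this
    simpa only [Units.val_mul, hU2] using this
  set M := (u : Matrix (Fin 2) (Fin 2) F) with hM
  have c10 : M 1 0 = 0 := by
    have := congrFun (congrFun e1 0) 0
    simpa [Matrix.mul_apply, Fin.sum_univ_two] using this
  have c01 : M 0 1 = 0 := by
    have := congrFun (congrFun e2 1) 1
    simpa [Matrix.mul_apply, Fin.sum_univ_two] using this
  have c11 : M 1 1 = M 0 0 := by
    have := congrFun (congrFun e1 0) 1
    simp [Matrix.mul_apply, Fin.sum_univ_two] at this
    linear_combination this
  refine ⟨M 0 0, ?_⟩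
  ext i j
  fin_cases i <;> fin_cases j <;>
    simp [Matrix.one_apply, c10, c01, c11]


lemma v_one_sub_pow_le (hna : IsNonarchimedean v) {x : F} (hx : v x ≤ 1) :
    ∀ n : ℕ, v (1 - x ^ n) ≤ v (1 - x) := by
  intro n
  induction n with
  | zero => simpa using v.nonneg (1 - x)
  | succ n ih =>
    have hrw : 1 - x ^ (n + 1) = (1 - x ^ n) * x + (1 - x) := by ring
    rw [hrw]
    refine le_trans (hna _ _) (max_le ?_ le_rfl)
    rw [v.map_mul]
    calc v (1 - x ^ n) * v x ≤ v (1 - x) * 1 :=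
          mul_le_mul ih hx (v.nonneg x) (v.nonneg _)
      _ = v (1 - x) := mul_one _
lemma v_one_sub_prim (hna : IsNonarchimedean v) {p : ℕ} (hp : 2 ≤ p) {ω : F}
    (hω : ω ^ p = 1) (hvω : v ω = 1) {k : ℕ} (hcop : Nat.Coprime k p) :
    v (1 - ω ^ k) = v (1 - ω) := by
  refine le_antisymm (v_one_sub_pow_le v hna hvω.le k) ?_
  obtain ⟨m, -, hm⟩ := Nat.exists_mul_mod_eq_one_of_coprime hcop (by omega)
  have hpow : (ω ^ k) ^ m = ω := by
    rw [← pow_mul]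
    conv_rhs => rw [← pow_one ω]
    rw [← Nat.div_add_mod (k * m) p, pow_add, pow_mul, hω, one_pow, one_mul, hm]
  have hvωk : v (ω ^ k) ≤ 1 := by rw [v.map_pow, hvω, one_pow]
  have := v_one_sub_pow_le v hna hvωk m
  rw [hpow] at this
  exact this

/-- The abstract ping-pong lemma for Möbius transformations over a nonarchimedean field. -/
lemma pingpong (hna : IsNonarchimedean v) {ι : Type*} [DecidableEq ι]
    (f : ι → (Matrix (Fin 2) (Fin 2) F)ˣ) (ctr : ι × Bool → F) (rad : ι × Bool → ℝ)
    (hsep : ∀ ℓ ℓ' : ι × Bool, ℓ ≠ ℓ' → max (rad ℓ) (rad ℓ') < v (ctr ℓ - ctr ℓ'))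
    (hbase : ∀ ℓ : ι × Bool, rad ℓ < v (0 - ctr ℓ))
    (hmap : ∀ ℓ : ι × Bool, ∀ z : F, rad (ℓ.1, !ℓ.2) < v (z - ctr (ℓ.1, !ℓ.2)) →
      mden ((cond ℓ.2 (f ℓ.1) (f ℓ.1)⁻¹ : (Matrix (Fin 2) (Fin 2) F)ˣ) : Matrix (Fin 2) (Fin 2) F) z ≠ 0 ∧
      v (mob ((cond ℓ.2 (f ℓ.1) (f ℓ.1)⁻¹ : (Matrix (Fin 2) (Fin 2) F)ˣ) : Matrix (Fin 2) (Fin 2) F) z - ctr ℓ) ≤ rad ℓ)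
    (g : FreeGroup ι)
    (hg : FreeGroup.lift f g ∈ Subgroup.center (Matrix (Fin 2) (Fin 2) F)ˣ) :
    g = 1 := by
  classical
  by_contra hne
  have hmain : ∀ L : List (ι × Bool),
      List.Chain' (fun a b : ι × Bool => ¬(a.1 = b.1 ∧ a.2 = !b.2)) L →
      ∀ ℓ L', L = ℓ :: L' →
      mden ((List.prod (L.map fun x => cond x.2 (f x.1) (f x.1)⁻¹) :
          (Matrix (Fin 2) (Fin 2) F)ˣ) : Matrix (Fin 2) (Fin 2) F) 0 ≠ 0 ∧
      v (mob ((List.prod (L.map fun x => cond x.2 (f x.1) (f x.1)⁻¹) :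
          (Matrix (Fin 2) (Fin 2) F)ˣ) : Matrix (Fin 2) (Fin 2) F) 0 - ctr ℓ) ≤ rad ℓ := by
    intro L
    induction L with
    | nil => intro _ ℓ L' h; exact absurd h (by simp)
    | cons a L ih =>
      intro hchain ℓ L' heq
      injection heq with h1 h2
      subst h1
      subst h2
      cases L with
      | nil =>
        simp only [List.map_cons, List.map_nil, List.prod_cons, List.prod_nil, mul_one]
        exact hmap a 0 (hbase _)
      | cons b L'' =>
        have hchain' : List.Chain' (fun a b : ι × Bool => ¬(a.1 = b.1 ∧ a.2 = !b.2)) (b :: L'') :=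
          hchain.tail
        have hRab : ¬(a.1 = b.1 ∧ a.2 = !b.2) := (List.isChain_cons_cons.mp hchain).1
        obtain ⟨hden', hz⟩ := ih hchain' b L'' rfl
        set P : (Matrix (Fin 2) (Fin 2) F)ˣ :=
          List.prod ((b :: L'').map fun x => cond x.2 (f x.1) (f x.1)⁻¹) with hP
        set z : F := mob (P : Matrix (Fin 2) (Fin 2) F) 0 with hzdef
        have hab : (a.1, !a.2) ≠ b := by
          intro hEq
          apply hRab
          constructor
          · rw [← hEq]
          · rw [← hEq]; simp
        have hdist := hsep (a.1, !a.2) b hab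
        have hzout : rad (a.1, !a.2) < v (z - ctr (a.1, !a.2)) := by
          have h1 : v (ctr b - ctr (a.1, !a.2)) = v (ctr (a.1, !a.2) - ctr b) :=
            v.map_sub _ _
          have h2 : v (z - ctr b) < v (ctr b - ctr (a.1, !a.2)) := by
            rw [h1]
            exact lt_of_le_of_lt (le_trans hz (le_max_right _ _)) hdist
          have h3 : z - ctr (a.1, !a.2) = (ctr b - ctr (a.1, !a.2)) + (z - ctr b) := by ring
          rw [h3, add_big v hna h2, h1]
          exact lt_of_le_of_lt (le_max_left _ _) hdist
        obtain ⟨hdenM, hmobM⟩ := hmap a z hzout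
        have hprod : List.prod ((a :: b :: L'').map fun x => cond x.2 (f x.1) (f x.1)⁻¹)
            = (cond a.2 (f a.1) (f a.1)⁻¹) * P := by
          rw [hP, List.map_cons, List.prod_cons]
        rw [hprod, Units.val_mul]
        have hdd := mden_mul ((cond a.2 (f a.1) (f a.1)⁻¹ : (Matrix (Fin 2) (Fin 2) F)ˣ) :
            Matrix (Fin 2) (Fin 2) F) (P : Matrix (Fin 2) (Fin 2) F) 0 hden'
        have hmm := mob_mul ((cond a.2 (f a.1) (f a.1)⁻¹ : (Matrix (Fin 2) (Fin 2) F)ˣ) :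
            Matrix (Fin 2) (Fin 2) F) (P : Matrix (Fin 2) (Fin 2) F) 0 hden' (by rw [← hzdef]; exact hdenM)
        constructor
        · rw [hdd, ← hzdef]
          exact mul_ne_zero hdenM hden'
        · rw [hmm, ← hzdef]
          exact hmobM
  have hLne : g.toWord ≠ [] := fun h => hne (FreeGroup.toWord_eq_nil_iff.mp h)
  rcases hLw : g.toWord with _ | ⟨ℓ, L'⟩
  · exact hLne hLw
  · have hchain := chain_of_reduced g.toWord (FreeGroup.reduce_toWord g)
    rw [hLw] at hchain
    obtain ⟨hden, hball⟩ := hmain (ℓ :: L') hchain ℓ L' rfl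
    have hlift : FreeGroup.lift f g
        = List.prod ((ℓ :: L').map fun x => cond x.2 (f x.1) (f x.1)⁻¹) := by
      conv_lhs => rw [← FreeGroup.mk_toWord (x := g)]
      rw [FreeGroup.lift_mk, hLw]
    obtain ⟨k, hk⟩ := center_scalar _ hg
    rw [hlift] at hk
    rw [hk] at hden hball
    have hmob0 : mob (k • (1 : Matrix (Fin 2) (Fin 2) F)) 0 = 0 := by
      simp [mob, Matrix.smul_apply, Matrix.one_apply]
    rw [hmob0] at hball
    exact absurd hball (not_le.mpr (hbase ℓ))

end GTPaux

set_option maxHeartbeats 2000000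

/-- Under the hypotheses of the genus-`2p` example, the images in
`PGL₂(F) = GL₂(F)/center` of the `2p` matrices
`Aᵢ = !![(1 - βπ) cᵢ, (β - 1) π cᵢ²; 1 - β, (β - π) cᵢ]` and
`Bᵢ = !![(1 - β'π) dᵢ, (β' - 1) π dᵢ²; 1 - β', (β' - π) dᵢ]`
(with `cᵢ = ζ ωⁱ`, `dᵢ = s + t ωⁱ`, `ω = ζ^p`) generate a free group of rank `2p`:
the homomorphism from the free group on `2p` generators sending them to the classes
of these matrices is injective. -/
theorem genus_two_p_schottky_group_free {F : Type*} [Field F]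
    (v : AbsoluteValue F ℝ) (hna : IsNonarchimedean v)
    (p : ℕ) (hp : p.Prime) (π ζ s t β β' : F)
    (hω_pow : (ζ ^ p) ^ p = 1) (hω_prim : ∀ k : ℕ, 0 < k → k < p → (ζ ^ p) ^ k ≠ 1)
    (hζ : v (1 - ζ) < 1)
    (hπ0 : 0 < v π) (hπ1 : v π < 1) (hωπ : v (1 - ζ ^ p) = v π)
    (ht : v t ^ p = v π)
    (hs : v s = 1) (hs1 : v (s - 1) = 1)
    (hβ0 : 0 < v β) (hβ : v β ≤ v π ^ 5) (hβ'0 : 0 < v β') (hβ' : v β' ≤ v π ^ 5)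
    (gA gB : Fin p → (Matrix (Fin 2) (Fin 2) F)ˣ)
    (hgA : ∀ i : Fin p, (gA i : Matrix (Fin 2) (Fin 2) F) =
      !![(1 - β * π) * (ζ * (ζ ^ p) ^ (i : ℕ)), (β - 1) * π * (ζ * (ζ ^ p) ^ (i : ℕ)) ^ 2;
         1 - β, (β - π) * (ζ * (ζ ^ p) ^ (i : ℕ))])
    (hgB : ∀ i : Fin p, (gB i : Matrix (Fin 2) (Fin 2) F) =
      !![(1 - β' * π) * (s + t * (ζ ^ p) ^ (i : ℕ)), (β' - 1) * π * (s + t * (ζ ^ p) ^ (i : ℕ)) ^ 2;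
         1 - β', (β' - π) * (s + t * (ζ ^ p) ^ (i : ℕ))]) :
    Function.Injective
      ((QuotientGroup.mk' (Subgroup.center (Matrix (Fin 2) (Fin 2) F)ˣ)).comp
        (FreeGroup.lift (Sum.elim gA gB : Fin p ⊕ Fin p → (Matrix (Fin 2) (Fin 2) F)ˣ))) := by
    classical
  rw [injective_iff_map_eq_one]
  intro g hg
  have hp2 : 2 ≤ p := hp.two_le
  have hq2 : (0:ℝ) < v π ^ 2 := by positivity
  have hq21 : v π ^ 2 < v π := by nlinarith
  have hq2lt1 : v π ^ 2 < 1 := by nlinarith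
  have hq32 : v π ^ 3 < v π ^ 2 := by nlinarith
  have hq31 : v π ^ 3 < v π := by nlinarith
  have hq3lt1 : v π ^ 3 < 1 := by nlinarith
  have hvζ : v ζ = 1 := by
    have := GTPaux.one_sub_small v hna hζ
    simpa using this
  have hvω : v (ζ ^ p) = 1 := by rw [v.map_pow, hvζ, one_pow]
  have hvωn : ∀ n : ℕ, v ((ζ ^ p) ^ n) = 1 := fun n => by rw [v.map_pow, hvω, one_pow]
  have hvcen : ∀ i : Fin p, v (ζ * (ζ ^ p) ^ (i:ℕ)) = 1 := fun i => by
    rw [v.map_mul, hvζ, hvωn, one_mul]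
  have hvt1 : v t < 1 := by
    by_contra h
    push_neg at h
    have h1 : (1:ℝ) ≤ v t ^ p := one_le_pow₀ h
    rw [ht] at h1; linarith
  have hvtq : v π < v t := by
    by_contra h
    push_neg at h
    have h1 : v t ^ p ≤ v π ^ p := pow_le_pow_left₀ (v.nonneg t) h p
    have h2 : v π ^ p ≤ v π ^ 2 := pow_le_pow_of_le_one hπ0.le hπ1.le hp2
    rw [ht] at h1; linarith
  have hprim : ∀ k : ℕ, 0 < k → k < p → v (1 - (ζ ^ p) ^ k) = v π := by
    intro k hk0 hkp
    have hcop : Nat.Coprime k p := Nat.Coprime.symm (hp.coprime_iff_not_dvd.mpr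
      (fun hdvd => absurd (Nat.le_of_dvd hk0 hdvd) (not_le.mpr hkp)))
    rw [GTPaux.v_one_sub_prim v hna hp2 hω_pow hvω hcop, hωπ]
  have hsub_le : ∀ n : ℕ, v (1 - (ζ ^ p) ^ n) ≤ v π := by
    intro n
    have := GTPaux.v_one_sub_pow_le v hna hvω.le n
    rw [hωπ] at this; exact this
  have hdiffN : ∀ m n : ℕ, n < m → m < p → v ((ζ ^ p) ^ m - (ζ ^ p) ^ n) = v π := by
    intro m n hnm hmp
    have h1 : (ζ ^ p) ^ m - (ζ ^ p) ^ n = ((ζ ^ p) ^ n) * (((ζ ^ p) ^ (m - n)) - 1) := by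
      rw [mul_sub, mul_one, ← pow_add]
      congr 2
      omega
    rw [h1, v.map_mul, hvωn, one_mul, v.map_sub]
    exact hprim (m - n) (by omega) (by omega)
  have hdiff : ∀ i j : Fin p, i ≠ j → v ((ζ ^ p) ^ (i:ℕ) - (ζ ^ p) ^ (j:ℕ)) = v π := by
    intro i j hne
    rcases lt_or_gt_of_ne (fun h : (i:ℕ) = (j:ℕ) => hne (Fin.ext h)) with h | h
    · rw [v.map_sub]; exact hdiffN _ _ h j.isLt
    · exact hdiffN _ _ h i.isLt
  have hvd : ∀ i : Fin p, v (s + t * (ζ ^ p) ^ (i:ℕ)) = 1 := by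
    intro i
    have hy : v (t * (ζ ^ p) ^ (i:ℕ)) < v s := by
      rw [v.map_mul, hvωn, mul_one, hs]; exact hvt1
    rw [GTPaux.add_big v hna hy, hs]
  have hc1 : ∀ n : ℕ, v (1 - ζ * (ζ ^ p) ^ n) < 1 := by
    intro n
    have hrw : 1 - ζ * (ζ ^ p) ^ n = (1 - ζ) * (ζ ^ p) ^ n + (1 - (ζ ^ p) ^ n) := by ring
    rw [hrw]
    refine lt_of_le_of_lt (hna _ _) (max_lt ?_ ?_)
    · rw [v.map_mul, hvωn, mul_one]; exact hζ
    · exact lt_of_le_of_lt (hsub_le n) hπ1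
  have hcd : ∀ i j : Fin p, v (ζ * (ζ ^ p) ^ (i:ℕ) - (s + t * (ζ ^ p) ^ (j:ℕ))) = 1 := by
    intro i j
    have hrw : ζ * (ζ ^ p) ^ (i:ℕ) - (s + t * (ζ ^ p) ^ (j:ℕ))
        = ((1 - s) + (ζ * (ζ ^ p) ^ (i:ℕ) - 1)) - t * (ζ ^ p) ^ (j:ℕ) := by ring
    have hx : v (1 - s) = 1 := by rw [v.map_sub]; exact hs1
    have hy : v (ζ * (ζ ^ p) ^ (i:ℕ) - 1) < 1 := by rw [v.map_sub]; exact hc1 (i:ℕ)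
    have h1 : v ((1 - s) + (ζ * (ζ ^ p) ^ (i:ℕ) - 1)) = 1 := by
      rw [GTPaux.add_big v hna (by rw [hx]; exact hy), hx]
    have hy2 : v (t * (ζ ^ p) ^ (j:ℕ)) < v ((1 - s) + (ζ * (ζ ^ p) ^ (i:ℕ) - 1)) := by
      rw [h1, v.map_mul, hvωn, mul_one]; exact hvt1
    rw [hrw, GTPaux.sub_big v hna hy2, h1]
  have hrA : v β / v π ^ 2 ≤ v π ^ 3 := by
    rw [div_le_iff₀ hq2]; nlinarith
  have hrB : v β' / v π ^ 2 ≤ v π ^ 3 := by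
    rw [div_le_iff₀ hq2]; nlinarith
  -- distance lemmas
  have hd1 : ∀ i j : Fin p, v (ζ * (ζ ^ p) ^ (i:ℕ) - π * (ζ * (ζ ^ p) ^ (j:ℕ))) = 1 := by
    intro i j
    have hy : v (π * (ζ * (ζ ^ p) ^ (j:ℕ))) < v (ζ * (ζ ^ p) ^ (i:ℕ)) := by
      rw [v.map_mul, hvcen j, mul_one, hvcen i]; exact hπ1
    rw [GTPaux.sub_big v hna hy, hvcen i]
  have hd3 : ∀ i j : Fin p, v (ζ * (ζ ^ p) ^ (i:ℕ) - π * (s + t * (ζ ^ p) ^ (j:ℕ))) = 1 := by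
    intro i j
    have hy : v (π * (s + t * (ζ ^ p) ^ (j:ℕ))) < v (ζ * (ζ ^ p) ^ (i:ℕ)) := by
      rw [v.map_mul, hvd j, mul_one, hvcen i]; exact hπ1
    rw [GTPaux.sub_big v hna hy, hvcen i]
  have hd4 : ∀ i j : Fin p, v (s + t * (ζ ^ p) ^ (i:ℕ) - π * (ζ * (ζ ^ p) ^ (j:ℕ))) = 1 := by
    intro i j
    have hy : v (π * (ζ * (ζ ^ p) ^ (j:ℕ))) < v (s + t * (ζ ^ p) ^ (i:ℕ)) := by
      rw [v.map_mul, hvcen j, mul_one, hvd i]; exact hπ1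
    rw [GTPaux.sub_big v hna hy, hvd i]
  have hd5 : ∀ i j : Fin p, v (s + t * (ζ ^ p) ^ (i:ℕ) - π * (s + t * (ζ ^ p) ^ (j:ℕ))) = 1 := by
    intro i j
    have hy : v (π * (s + t * (ζ ^ p) ^ (j:ℕ))) < v (s + t * (ζ ^ p) ^ (i:ℕ)) := by
      rw [v.map_mul, hvd j, mul_one, hvd i]; exact hπ1
    rw [GTPaux.sub_big v hna hy, hvd i]
  have hd6 : ∀ i j : Fin p, i ≠ j → v (ζ * (ζ ^ p) ^ (i:ℕ) - ζ * (ζ ^ p) ^ (j:ℕ)) = v π := by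
    intro i j hij
    have hrw : ζ * (ζ ^ p) ^ (i:ℕ) - ζ * (ζ ^ p) ^ (j:ℕ)
        = ζ * ((ζ ^ p) ^ (i:ℕ) - (ζ ^ p) ^ (j:ℕ)) := by ring
    rw [hrw, v.map_mul, hvζ, one_mul, hdiff i j hij]
  have hd7 : ∀ i j : Fin p, i ≠ j →
      v (π * (ζ * (ζ ^ p) ^ (i:ℕ)) - π * (ζ * (ζ ^ p) ^ (j:ℕ))) = v π ^ 2 := by
    intro i j hij
    have hrw : π * (ζ * (ζ ^ p) ^ (i:ℕ)) - π * (ζ * (ζ ^ p) ^ (j:ℕ))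
        = (π * ζ) * ((ζ ^ p) ^ (i:ℕ) - (ζ ^ p) ^ (j:ℕ)) := by ring
    rw [hrw, v.map_mul, v.map_mul, hvζ, mul_one, hdiff i j hij]
    ring
  have hd8 : ∀ i j : Fin p, i ≠ j →
      v (s + t * (ζ ^ p) ^ (i:ℕ) - (s + t * (ζ ^ p) ^ (j:ℕ))) = v t * v π := by
    intro i j hij
    have hrw : s + t * (ζ ^ p) ^ (i:ℕ) - (s + t * (ζ ^ p) ^ (j:ℕ))
        = t * ((ζ ^ p) ^ (i:ℕ) - (ζ ^ p) ^ (j:ℕ)) := by ring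
    rw [hrw, v.map_mul, hdiff i j hij]
  have hd9 : ∀ i j : Fin p, i ≠ j →
      v (π * (s + t * (ζ ^ p) ^ (i:ℕ)) - π * (s + t * (ζ ^ p) ^ (j:ℕ))) = v π * (v t * v π) := by
    intro i j hij
    have hrw : π * (s + t * (ζ ^ p) ^ (i:ℕ)) - π * (s + t * (ζ ^ p) ^ (j:ℕ))
        = (π * t) * ((ζ ^ p) ^ (i:ℕ) - (ζ ^ p) ^ (j:ℕ)) := by ring
    rw [hrw, v.map_mul, v.map_mul, hdiff i j hij]
    ring
  refine GTPaux.pingpong v hna (Sum.elim gA gB)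
    (fun ℓ => cond ℓ.2
      (Sum.elim (fun i : Fin p => ζ * (ζ ^ p) ^ (i:ℕ)) (fun i : Fin p => s + t * (ζ ^ p) ^ (i:ℕ)) ℓ.1)
      (π * Sum.elim (fun i : Fin p => ζ * (ζ ^ p) ^ (i:ℕ)) (fun i : Fin p => s + t * (ζ ^ p) ^ (i:ℕ)) ℓ.1))
    (fun ℓ => cond ℓ.2 (v π ^ 2)
      (v (Sum.elim (fun _ : Fin p => β) (fun _ : Fin p => β') ℓ.1) / v π ^ 2))
    ?_ ?_ ?_ g ?_
  · -- separation
    rintro ⟨x, b⟩ ⟨x', b'⟩ hne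
    rcases x with i | i <;> rcases x' with j | j <;> rcases b <;> rcases b' <;>
      simp only [Sum.elim_inl, Sum.elim_inr, cond_true, cond_false]
    · have hij : i ≠ j := by rintro rfl; exact hne rfl
      rw [hd7 i j hij, max_self]
      exact lt_of_le_of_lt hrA hq32
    · rw [v.map_sub, hd1 j i]
      exact max_lt (lt_of_le_of_lt hrA hq3lt1) hq2lt1
    · rw [hd1 i j]
      exact max_lt hq2lt1 (lt_of_le_of_lt hrA hq3lt1)
    · have hij : i ≠ j := by rintro rfl; exact hne rfl
      rw [hd6 i j hij, max_self]
      exact hq21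
    · have hrw : π * (ζ * (ζ ^ p) ^ (i:ℕ)) - π * (s + t * (ζ ^ p) ^ (j:ℕ))
          = π * (ζ * (ζ ^ p) ^ (i:ℕ) - (s + t * (ζ ^ p) ^ (j:ℕ))) := by ring
      rw [hrw, v.map_mul, hcd i j, mul_one]
      exact max_lt (lt_of_le_of_lt hrA hq31) (lt_of_le_of_lt hrB hq31)
    · rw [v.map_sub, hd4 j i]
      exact max_lt (lt_of_le_of_lt hrA hq3lt1) hq2lt1
    · rw [hd3 i j]
      exact max_lt hq2lt1 (lt_of_le_of_lt hrB hq3lt1)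
    · rw [hcd i j, max_self]
      exact hq2lt1
    · have hrw : π * (s + t * (ζ ^ p) ^ (i:ℕ)) - π * (ζ * (ζ ^ p) ^ (j:ℕ))
          = π * (ζ * (ζ ^ p) ^ (j:ℕ) - (s + t * (ζ ^ p) ^ (i:ℕ))) * (-1) := by ring
      rw [hrw, v.map_mul, v.map_mul, hcd j i, mul_one, v.map_neg, v.map_one, mul_one]
      exact max_lt (lt_of_le_of_lt hrB hq31) (lt_of_le_of_lt hrA hq31)
    · rw [v.map_sub, hd3 j i]
      exact max_lt (lt_of_le_of_lt hrB hq3lt1) hq2lt1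
    · rw [hd4 i j]
      exact max_lt hq2lt1 (lt_of_le_of_lt hrA hq3lt1)
    · rw [v.map_sub, hcd j i, max_self]
      exact hq2lt1
    · have hij : i ≠ j := by rintro rfl; exact hne rfl
      rw [hd9 i j hij, max_self]
      refine lt_of_le_of_lt hrB ?_
      nlinarith [mul_pos (mul_pos (sub_pos.mpr hvtq) hπ0) hπ0]
    · rw [v.map_sub, hd5 j i]
      exact max_lt (lt_of_le_of_lt hrB hq3lt1) hq2lt1
    · rw [hd5 i j]
      exact max_lt hq2lt1 (lt_of_le_of_lt hrB hq3lt1)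
    · have hij : i ≠ j := by rintro rfl; exact hne rfl
      rw [hd8 i j hij, max_self]
      nlinarith [mul_pos (sub_pos.mpr hvtq) hπ0]
  · -- base point
    rintro ⟨x, b⟩
    rcases x with i | i <;> rcases b <;>
      simp only [Sum.elim_inl, Sum.elim_inr, cond_true, cond_false] <;>
      rw [zero_sub, v.map_neg]
    · rw [v.map_mul, hvcen i, mul_one]
      exact lt_of_le_of_lt hrA hq31
    · rw [hvcen i]
      exact hq2lt1
    · rw [v.map_mul, hvd i, mul_one]
      exact lt_of_le_of_lt hrB hq31
    · rw [hvd i]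
      exact hq2lt1
  · -- mapping
    rintro ⟨x, b⟩ z hz
    rcases x with i | i <;> rcases b <;>
      simp only [Sum.elim_inl, Sum.elim_inr, cond_true, cond_false, Bool.not_true,
        Bool.not_false] at hz ⊢
    · -- (inl i, false) : gA i inverse
      have hdet : ((gA i : Matrix (Fin 2) (Fin 2) F)).det ≠ 0 :=
        isUnit_iff_ne_zero.mp ((Matrix.isUnit_iff_isUnit_det _).mp (gA i).isUnit)
      have hdet' : ((gA i : Matrix (Fin 2) (Fin 2) F)).det⁻¹ ≠ 0 := inv_ne_zero hdet
      have hcoe : (((gA i)⁻¹ : (Matrix (Fin 2) (Fin 2) F)ˣ) : Matrix (Fin 2) (Fin 2) F)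
          = ((gA i : Matrix (Fin 2) (Fin 2) F)).det⁻¹ •
            (Matrix.adjugate (gA i : Matrix (Fin 2) (Fin 2) F)) := by
        rw [Matrix.coe_units_inv, Matrix.inv_def, Ring.inverse_eq_inv']
      rw [hcoe, GTPaux.mden_smul, GTPaux.mob_smul _ hdet', Matrix.adjugate_fin_two, hgA i]
      simp only [GTPaux.mden, GTPaux.mob, Matrix.cons_val', Matrix.cons_val_zero,
        Matrix.cons_val_one, Matrix.head_cons, Matrix.head_fin_const, Matrix.empty_val',
        Matrix.cons_val_fin_one, Matrix.of_apply]
      obtain ⟨h1, h2⟩ := GTPaux.bwd v hna hπ0 hπ1 (hvcen i) hβ0 hβ hz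
      rw [hgA i] at hdet'
      exact ⟨mul_ne_zero hdet' h1, h2⟩
    · -- (inl i, true) : gA i
      rw [hgA i]
      simp only [GTPaux.mden, GTPaux.mob, Matrix.cons_val', Matrix.cons_val_zero,
        Matrix.cons_val_one, Matrix.head_cons, Matrix.head_fin_const, Matrix.empty_val',
        Matrix.cons_val_fin_one, Matrix.of_apply]
      exact GTPaux.fwd v hna hπ0 hπ1 (hvcen i) hβ0 hβ hz
    · -- (inr i, false)
      have hdet : ((gB i : Matrix (Fin 2) (Fin 2) F)).det ≠ 0 :=
        isUnit_iff_ne_zero.mp ((Matrix.isUnit_iff_isUnit_det _).mp (gB i).isUnit)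
      have hdet' : ((gB i : Matrix (Fin 2) (Fin 2) F)).det⁻¹ ≠ 0 := inv_ne_zero hdet
      have hcoe : (((gB i)⁻¹ : (Matrix (Fin 2) (Fin 2) F)ˣ) : Matrix (Fin 2) (Fin 2) F)
          = ((gB i : Matrix (Fin 2) (Fin 2) F)).det⁻¹ •
            (Matrix.adjugate (gB i : Matrix (Fin 2) (Fin 2) F)) := by
        rw [Matrix.coe_units_inv, Matrix.inv_def, Ring.inverse_eq_inv']
      rw [hcoe, GTPaux.mden_smul, GTPaux.mob_smul _ hdet', Matrix.adjugate_fin_two, hgB i]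
      simp only [GTPaux.mden, GTPaux.mob, Matrix.cons_val', Matrix.cons_val_zero,
        Matrix.cons_val_one, Matrix.head_cons, Matrix.head_fin_const, Matrix.empty_val',
        Matrix.cons_val_fin_one, Matrix.of_apply]
      obtain ⟨h1, h2⟩ := GTPaux.bwd v hna hπ0 hπ1 (hvd i) hβ'0 hβ' hz
      rw [hgB i] at hdet'
      exact ⟨mul_ne_zero hdet' h1, h2⟩
    · -- (inr i, true)
      rw [hgB i]
      simp only [GTPaux.mden, GTPaux.mob, Matrix.cons_val', Matrix.cons_val_zero,
        Matrix.cons_val_one, Matrix.head_cons, Matrix.head_fin_const, Matrix.empty_val',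
        Matrix.cons_val_fin_one, Matrix.of_apply]
      exact GTPaux.fwd v hna hπ0 hπ1 (hvd i) hβ'0 hβ' hz
  · -- membership in the center
    rw [MonoidHom.comp_apply, QuotientGroup.mk'_apply, QuotientGroup.eq_one_iff] at hg
    exact hg
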